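/- arXiv:2109.13313 — 2 statements merged into one kernel-verified Lean document; each statement's English description precedes it below -/
import Mathlib

section
/- Suppose A : ℝⁿˣᵐ is differentiable in a parameter t and admits a differentiable QR decomposition A(t) = Q(t) R(t) with Qᵀ Q = I and R upper-triangular and invertible. Then at any point where R(t) = I, the derivative of R satisfies R' = Qᵀ A' − Qᵀ Q', where Qᵀ Q' is skew-symmetric and R' is upper triangular; hence the diagonal entries satisfy (R')ᵢᵢ = (Qᵀ A')ᵢᵢ and for i < j, (R')ᵢⱼ = (Qᵀ A')ᵢⱼ + (Qᵀ A')ⱼᵢ. -/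
open Matrix

/-- Differentiable QR decomposition `A = Q R` with `Qᵀ Q = I`, `R` upper-triangular and
invertible. At a point `t₀` where `R t₀ = I`, the derivative satisfies
`R' = Qᵀ A' − Qᵀ Q'`, with `Qᵀ Q'` skew-symmetric and `R'` upper triangular; hence
`(R')ᵢᵢ = (Qᵀ A')ᵢᵢ` and for `i < j`, `(R')ᵢⱼ = (Qᵀ A')ᵢⱼ + (Qᵀ A')ⱼᵢ`. -/
theorem stmt1 (n m : ℕ) (A A' Q Q' : ℝ → Matrix (Fin n) (Fin m) ℝ)
    (R R' : ℝ → Matrix (Fin m) (Fin m) ℝ)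
    (hA : ∀ i j t, HasDerivAt (fun s => A s i j) (A' t i j) t)
    (hQ : ∀ i j t, HasDerivAt (fun s => Q s i j) (Q' t i j) t)
    (hR : ∀ i j t, HasDerivAt (fun s => R s i j) (R' t i j) t)
    (hQR : ∀ t, A t = Q t * R t)
    (horth : ∀ t, (Q t)ᵀ * Q t = 1)
    (hupper : ∀ t i j, j < i → R t i j = 0)
    (hinv : ∀ t, IsUnit (R t).det)
    (t₀ : ℝ) (hR0 : R t₀ = 1) :
    R' t₀ = (Q t₀)ᵀ * A' t₀ - (Q t₀)ᵀ * Q' t₀ ∧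
    ((Q t₀)ᵀ * Q' t₀)ᵀ = -((Q t₀)ᵀ * Q' t₀) ∧
    (∀ i j : Fin m, j < i → R' t₀ i j = 0) ∧
    (∀ i : Fin m, R' t₀ i i = ((Q t₀)ᵀ * A' t₀) i i) ∧
    (∀ i j : Fin m, i < j →
      R' t₀ i j = ((Q t₀)ᵀ * A' t₀) i j + ((Q t₀)ᵀ * A' t₀) j i) := by
  -- Product rule: A' = Q' R + Q R'
  have key : ∀ t, A' t = Q' t * R t + Q t * R' t := by
    intro t
    ext i j
    have h1 : HasDerivAt (fun s => A s i j)
        (∑ k, (Q' t i k * R t k j + Q t i k * R' t k j)) t := by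
      have heq : (fun s => A s i j) = fun s => ∑ k, Q s i k * R s k j := by
        funext s; rw [hQR]; rfl
      rw [heq]
      exact HasDerivAt.fun_sum fun k _ => (hQ i k t).mul (hR k j t)
    have := (hA i j t).unique h1
    simp only [Matrix.add_apply, Matrix.mul_apply, this, Finset.sum_add_distrib]
  -- Skew-symmetry: Q'ᵀ Q + Qᵀ Q' = 0
  have skew : ∀ t, (Q' t)ᵀ * Q t + (Q t)ᵀ * Q' t = 0 := by
    intro t
    ext i j
    have h1 : HasDerivAt (fun s => ∑ k, Q s k i * Q s k j)
        (∑ k, (Q' t k i * Q t k j + Q t k i * Q' t k j)) t :=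
      HasDerivAt.fun_sum fun k _ => (hQ k i t).mul (hQ k j t)
    have h2 : (fun s : ℝ => ∑ k, Q s k i * Q s k j) = fun _ => (1 : Matrix (Fin m) (Fin m) ℝ) i j := by
      funext s
      have := horth s
      rw [← this]
      simp [Matrix.mul_apply, Matrix.transpose_apply]
    have h3 : HasDerivAt (fun s => ∑ k, Q s k i * Q s k j) 0 t := by
      rw [h2]; exact hasDerivAt_const _ _
    have h4 := h3.unique h1
    simp only [Matrix.add_apply, Matrix.mul_apply, Matrix.transpose_apply, Matrix.zero_apply,
      ← Finset.sum_add_distrib]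
    exact h4.symm
  -- R' is upper triangular
  have hup : ∀ t i j, j < i → R' t i j = 0 := by
    intro t i j hij
    have h1 : (fun s => R s i j) = fun _ => (0 : ℝ) := by
      funext s; exact hupper s i j hij
    have h2 : HasDerivAt (fun s => R s i j) 0 t := by
      rw [h1]; exact hasDerivAt_const _ _
    exact ((hR i j t).unique h2)
  -- Main equation at t₀
  have hkey0 : A' t₀ = Q' t₀ + Q t₀ * R' t₀ := by
    have := key t₀; rwa [hR0, Matrix.mul_one] at this
  have hmain : R' t₀ = (Q t₀)ᵀ * A' t₀ - (Q t₀)ᵀ * Q' t₀ := by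
    rw [hkey0, Matrix.mul_add, ← Matrix.mul_assoc, horth, Matrix.one_mul]
    abel
  have hskew : ((Q t₀)ᵀ * Q' t₀)ᵀ = -((Q t₀)ᵀ * Q' t₀) := by
    have := skew t₀
    rw [Matrix.transpose_mul, Matrix.transpose_transpose]
    linear_combination (norm := noncomm_ring) this
  refine ⟨hmain, hskew, hup t₀, ?_, ?_⟩
  · intro i
    have hd : ((Q t₀)ᵀ * Q' t₀) i i = 0 := by
      have := congrFun (congrFun hskew i) i
      simp only [Matrix.transpose_apply, Matrix.neg_apply] at this
      linarith
    rw [hmain]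
    simp [Matrix.sub_apply, hd]
  · intro i j hij
    have hlow : R' t₀ j i = 0 := hup t₀ j i hij
    have hji : ((Q t₀)ᵀ * Q' t₀) j i = ((Q t₀)ᵀ * A' t₀) j i := by
      have := congrFun (congrFun hmain j) i
      simp only [Matrix.sub_apply, hlow] at this
      linarith
    have hijQ : ((Q t₀)ᵀ * Q' t₀) i j = -((Q t₀)ᵀ * A' t₀) j i := by
      have := congrFun (congrFun hskew j) i
      simp only [Matrix.transpose_apply, Matrix.neg_apply] at this
      linarith [hji]
    rw [hmain]
    simp only [Matrix.sub_apply, hijQ]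
    ring
end

section
/- Let v_k satisfy the regularized tangent recursion v_{k+1} = A_k v_k + χ_{k+1} − Σᵢ c_{k+1}ⁱ q_{k+1}ⁱ with c_{k+1}ⁱ = q_{k+1}ⁱ · (A_k v_k + χ_{k+1}) and q_{k+1}¹,…,q_{k+1}ᵐ orthonormal. If ‖(I − Q_{k+1} Q_{k+1}ᵀ) A_k x‖ ≤ λ‖x‖ for all x orthogonal to range(Q_k), with λ ∈ (0,1), and ‖χ_k‖ ≤ c for all k, and v_0 = 0, then v_k · q_kⁱ = 0 for all k ≥ 1, i, and ‖v_k‖ ≤ c/(1 − λ) for all k. -/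
open scoped RealInnerProductSpace

lemma proj_norm_le {E : Type*} [NormedAddCommGroup E] [InnerProductSpace ℝ E]
    {m : ℕ} {q : Fin m → E} (ho : Orthonormal ℝ q) (x : E) :
    ‖x - ∑ i, ⟪q i, x⟫ • q i‖ ≤ ‖x‖ := by
  have hs : ‖∑ i, ⟪q i, x⟫ • q i‖ ^ 2 = ∑ i, ⟪q i, x⟫ ^ 2 := by
    rw [← real_inner_self_eq_norm_sq, ho.inner_sum]
    simp [sq]
  have hx : ⟪x, ∑ i, ⟪q i, x⟫ • q i⟫ = ∑ i, ⟪q i, x⟫ ^ 2 := by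
    rw [inner_sum]
    congr 1; ext i
    rw [real_inner_smul_right, real_inner_comm]; ring
  have h2 : ‖x - ∑ i, ⟪q i, x⟫ • q i‖ ^ 2 ≤ ‖x‖ ^ 2 := by
    rw [norm_sub_sq_real, hs, hx]
    have : (0:ℝ) ≤ ∑ i, ⟪q i, x⟫ ^ 2 := Finset.sum_nonneg fun i _ => sq_nonneg _
    nlinarith
  nlinarith [norm_nonneg (x - ∑ i, ⟪q i, x⟫ • q i), norm_nonneg x]

/-- Regularized tangent recursion: with `v_{k+1} = A_k v_k + χ_{k+1} − Σᵢ c_{k+1}ⁱ q_{k+1}ⁱ`,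
`c_{k+1}ⁱ = q_{k+1}ⁱ ⬝ (A_k v_k + χ_{k+1})`, orthonormal `q_k`, a uniform contraction
of the projected dynamics on the orthogonal complement of the unstable subspace
(`λ ∈ (0,1)`), `‖χ_k‖ ≤ c`, and `v_0 = 0`: then `v_k ⊥ q_kⁱ` for all `k ≥ 1`, `i`, and
`‖v_k‖ ≤ c/(1 − λ)` for all `k`. -/
theorem stmt18 (n m : ℕ)
    (A : ℕ → Matrix (Fin n) (Fin n) ℝ)
    (q : ℕ → Fin m → EuclideanSpace ℝ (Fin n))
    (χ v : ℕ → EuclideanSpace ℝ (Fin n))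
    (cc : ℕ → Fin m → ℝ) (lam c : ℝ)
    (horth : ∀ k, ∀ i j : Fin m, ⟪q k i, q k j⟫ = if i = j then (1 : ℝ) else 0)
    (hc : ∀ k i, cc (k + 1) i = ⟪q (k + 1) i, Matrix.toEuclideanLin (A k) (v k) + χ (k + 1)⟫)
    (hrec : ∀ k, v (k + 1) =
      Matrix.toEuclideanLin (A k) (v k) + χ (k + 1) - ∑ i, cc (k + 1) i • q (k + 1) i)
    (hlam : lam ∈ Set.Ioo (0 : ℝ) 1)
    (hcontr : ∀ k (x : EuclideanSpace ℝ (Fin n)), (∀ i, ⟪q k i, x⟫ = 0) →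
      ‖Matrix.toEuclideanLin (A k) x -
        ∑ i, ⟪q (k + 1) i, Matrix.toEuclideanLin (A k) x⟫ • q (k + 1) i‖ ≤ lam * ‖x‖)
    (hχ : ∀ k, ‖χ k‖ ≤ c)
    (h0 : v 0 = 0) :
    (∀ k, 1 ≤ k → ∀ i, ⟪v k, q k i⟫ = 0) ∧ (∀ k, ‖v k‖ ≤ c / (1 - lam)) := by
  obtain ⟨hlam0, hlam1⟩ := hlam
  have hc0 : (0:ℝ) ≤ c := le_trans (norm_nonneg _) (hχ 0)
  have h1l : (0:ℝ) < 1 - lam := by linarith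
  have ho : ∀ k, Orthonormal ℝ (q k) := fun k => orthonormal_iff_ite.mpr (horth k)
  -- orthogonality at every k (for k = 0 it holds since v 0 = 0)
  have horthv : ∀ k, ∀ i, ⟪q k i, v k⟫ = 0 := by
    intro k
    cases k with
    | zero => intro i; simp [h0]
    | succ k =>
      intro i
      rw [hrec k, inner_sub_right, inner_sum]
      simp only [inner_smul_right, horth, mul_ite, mul_one, mul_zero]
      rw [Finset.sum_ite_eq Finset.univ i (fun j => cc (k+1) j)]
      simp [hc k i]
  -- decomposition of v (k+1)
  have hdecomp : ∀ k, v (k + 1) =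
      (Matrix.toEuclideanLin (A k) (v k)
        - ∑ i, ⟪q (k+1) i, Matrix.toEuclideanLin (A k) (v k)⟫ • q (k+1) i)
      + (χ (k + 1) - ∑ i, ⟪q (k+1) i, χ (k+1)⟫ • q (k+1) i) := by
    intro k
    rw [hrec k]
    have : ∀ i, cc (k+1) i • q (k+1) i
        = ⟪q (k+1) i, Matrix.toEuclideanLin (A k) (v k)⟫ • q (k+1) i
          + ⟪q (k+1) i, χ (k+1)⟫ • q (k+1) i := by
      intro i
      rw [hc k i, inner_add_right, add_smul]
    rw [Finset.sum_congr rfl fun i _ => this i, Finset.sum_add_distrib]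
    abel
  have hbound : ∀ k, ‖v k‖ ≤ c / (1 - lam) := by
    intro k
    induction k with
    | zero => simp [h0]; positivity
    | succ k ih =>
      have h1 : ‖Matrix.toEuclideanLin (A k) (v k)
          - ∑ i, ⟪q (k+1) i, Matrix.toEuclideanLin (A k) (v k)⟫ • q (k+1) i‖ ≤ lam * ‖v k‖ :=
        hcontr k (v k) (horthv k)
      have h2 : ‖χ (k + 1) - ∑ i, ⟪q (k+1) i, χ (k+1)⟫ • q (k+1) i‖ ≤ c :=
        le_trans (proj_norm_le (ho (k+1)) (χ (k+1))) (hχ (k+1))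
      calc ‖v (k+1)‖ ≤ _ + _ := by rw [hdecomp k]; exact norm_add_le _ _
        _ ≤ lam * ‖v k‖ + c := add_le_add h1 h2
        _ ≤ lam * (c / (1 - lam)) + c :=
          add_le_add (mul_le_mul_of_nonneg_left ih hlam0.le) (le_refl c)
        _ = c / (1 - lam) := by field_simp; ring
  refine ⟨?_, hbound⟩
  intro k hk i
  obtain ⟨k', rfl⟩ := Nat.exists_eq_add_of_le hk
  rw [real_inner_comm]
  exact horthv (1 + k') i
end
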